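/- (Propagation of the time-derivative bound from the contact set.) Let σ ∈ (0,2) and Q₁ = B₁×(−1,0]. Let Γ : cl(Q₁) → ℝ be continuous, concave in the space variable x and nondecreasing in time t, with Γ = 0 on the parabolic boundary ∂ₚQ₁ = (∂B₁×(−1,0]) ∪ (cl(B₁)×{−1}), and suppose Γ is C² in x and C¹ in t on Q₁. Let 𝒞 = {(x,t) ∈ Q₁ : det(D²ₓΓ(x,t)) ≠ 0}. If 0 ≤ ∂_tΓ ≤ M on 𝒞 for some M > 0, then 0 ≤ ∂_tΓ ≤ 2M on all of Q₁. -/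

import Mathlib

open MeasureTheory Set Metric Filter
open scoped RealInnerProductSpace Topology ENNReal Classical

noncomputable section

/-- ℝⁿ as a Euclidean space. -/
abbrev Eu (n : ℕ) : Type := EuclideanSpace ℝ (Fin n)

/-- Second-order symmetric difference μ(u,x,y,t) = u(x+y,t) + u(x−y,t) − 2u(x,t). -/
def pmu (n : ℕ) (u : Eu n → ℝ → ℝ) (x y : Eu n) (t : ℝ) : ℝ :=
  u (x + y) t + u (x - y) t - 2 * u x t

/-- Maximal Pucci-type extremal operator of order σ. -/
def MPlus (n : ℕ) (lam Lam σ : ℝ) (u : Eu n → ℝ → ℝ) (x : Eu n) (t : ℝ) : ℝ :=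
  (2 - σ) * ∫ y : Eu n,
    (Lam * max (pmu n u x y t) 0 - lam * max (-(pmu n u x y t)) 0) / ‖y‖ ^ ((n : ℝ) + σ)

/-- Minimal Pucci-type extremal operator of order σ. -/
def MMinus (n : ℕ) (lam Lam σ : ℝ) (u : Eu n → ℝ → ℝ) (x : Eu n) (t : ℝ) : ℝ :=
  (2 - σ) * ∫ y : Eu n,
    (lam * max (pmu n u x y t) 0 - Lam * max (-(pmu n u x y t)) 0) / ‖y‖ ^ ((n : ℝ) + σ)

/-- Parabolic cylinder Q_r(x,t) = B_r(x) × (t − r^σ, t]. -/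
def pQ (n : ℕ) (σ r : ℝ) (x : Eu n) (t : ℝ) : Set (Eu n × ℝ) :=
  ball x r ×ˢ Ioc (t - r ^ σ) t

/-- Viscosity subsolution of `Op u − u_t ≥ g` on `D`. -/
def IsViscSubsol (n : ℕ) (σ : ℝ) (Op : (Eu n → ℝ → ℝ) → Eu n → ℝ → ℝ)
    (u g : Eu n → ℝ → ℝ) (D : Set (Eu n × ℝ)) : Prop :=
  UpperSemicontinuousOn (fun p : Eu n × ℝ => u p.1 p.2) (closure D) ∧
  ∀ x t, (x, t) ∈ D → ∀ ρ > (0 : ℝ), pQ n σ ρ x t ⊆ D →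
    ∀ φ : Eu n → ℝ → ℝ,
      ContDiffOn ℝ 2 (fun p : Eu n × ℝ => φ p.1 p.2) (pQ n σ ρ x t) →
      φ x t = u x t →
      (∀ p ∈ pQ n σ ρ x t, p ≠ (x, t) → u p.1 p.2 < φ p.1 p.2) →
      Op (fun y s => if (y, s) ∈ pQ n σ ρ x t then φ y s else u y s) x t
        - deriv (fun s => φ x s) t ≥ g x t

/-- Viscosity supersolution of `Op u − u_t ≤ g` on `D`. -/
def IsViscSupersol (n : ℕ) (σ : ℝ) (Op : (Eu n → ℝ → ℝ) → Eu n → ℝ → ℝ)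
    (u g : Eu n → ℝ → ℝ) (D : Set (Eu n × ℝ)) : Prop :=
  LowerSemicontinuousOn (fun p : Eu n × ℝ => u p.1 p.2) (closure D) ∧
  ∀ x t, (x, t) ∈ D → ∀ ρ > (0 : ℝ), pQ n σ ρ x t ⊆ D →
    ∀ φ : Eu n → ℝ → ℝ,
      ContDiffOn ℝ 2 (fun p : Eu n × ℝ => φ p.1 p.2) (pQ n σ ρ x t) →
      φ x t = u x t →
      (∀ p ∈ pQ n σ ρ x t, p ≠ (x, t) → φ p.1 p.2 < u p.1 p.2) →
      Op (fun y s => if (y, s) ∈ pQ n σ ρ x t then φ y s else u y s) x t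
        - deriv (fun s => φ x s) t ≤ g x t

/-- Viscosity solution of `Op u − u_t = g` on `D`. -/
def IsViscSol (n : ℕ) (σ : ℝ) (Op : (Eu n → ℝ → ℝ) → Eu n → ℝ → ℝ)
    (u g : Eu n → ℝ → ℝ) (D : Set (Eu n × ℝ)) : Prop :=
  IsViscSubsol n σ Op u g D ∧ IsViscSupersol n σ Op u g D

/-- Concave in space and nondecreasing in time on Q₂ = B₂ × (−2^σ, 0]. -/
def pConcMono (n : ℕ) (σ : ℝ) (v : Eu n → ℝ → ℝ) : Prop :=
  (∀ t ∈ Ioc (-(2 : ℝ) ^ σ) (0 : ℝ), ConcaveOn ℝ (ball (0 : Eu n) 2) (fun x => v x t)) ∧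
  (∀ x ∈ ball (0 : Eu n) 2, MonotoneOn (fun t => v x t) (Ioc (-(2 : ℝ) ^ σ) (0 : ℝ)))

/-- Concave envelope of u in Q₂ (zero outside Q₂). -/
def concEnv (n : ℕ) (σ : ℝ) (u : Eu n → ℝ → ℝ) (y : Eu n) (s : ℝ) : ℝ :=
  if (y, s) ∈ pQ n σ 2 0 0 then
    sInf {z : ℝ | ∃ v : Eu n → ℝ → ℝ, pConcMono n σ v ∧
      (∀ p ∈ pQ n σ 2 0 0, max (u p.1 p.2) 0 < v p.1 p.2) ∧ z = v y s}
  else 0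

/-- Contact set 𝒞(u,Γ,Q₁). -/
def contactSet (n : ℕ) (σ : ℝ) (u : Eu n → ℝ → ℝ) : Set (Eu n × ℝ) :=
  {p ∈ pQ n σ 1 0 0 | u p.1 p.2 = concEnv n σ u p.1 p.2}

/-- Parabolic normal map 𝒩_w(A). -/
def normalMap (n : ℕ) (σ : ℝ) (w : Eu n → ℝ → ℝ) (A : Set (Eu n × ℝ)) : Set (Eu n × ℝ) :=
  {q | ∃ p ∈ A, q.2 = w p.1 p.2 - ⟪q.1, p.1⟫ ∧ w p.1 p.2 - ⟪q.1, p.1⟫ ≤ p.2 ∧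
       ∀ z ∈ pQ n σ 2 0 0, w z.1 z.2 ≤ w p.1 p.2 + ⟪q.1, z.1 - p.1⟫}

/-- Spatial superdifferential of w at (x,t) (relative to B₂). -/
def superDiff (n : ℕ) (w : Eu n → ℝ → ℝ) (x : Eu n) (t : ℝ) : Set (Eu n) :=
  {p | ∀ y ∈ ball (0 : Eu n) 2, w y t ≤ w x t + ⟪p, y - x⟫}

/-- Half-open (n+1)-dimensional cube with lower corner (a,b) and sidelength s. -/
def pCube (n : ℕ) (a : Eu n) (b s : ℝ) : Set (Eu n × ℝ) :=
  {p | (∀ i, p.1 i ∈ Ico (a i) (a i + s)) ∧ p.2 ∈ Ico b (b + s)}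

/-- The box 𝒦_r(x,t) = {(y,s) : max(|y₁−x₁|²,…,|yₙ−xₙ|²,|t−s|) < r²}. -/
def KBox (n : ℕ) (r : ℝ) (x : Eu n) (t : ℝ) : Set (Eu n × ℝ) :=
  {p | (∀ i, |p.1 i - x i| < r) ∧ |t - p.2| < r ^ 2}

/-- Hessian matrix of g : ℝⁿ → ℝ at x. -/
def hessMat (n : ℕ) (g : Eu n → ℝ) (x : Eu n) : Matrix (Fin n) (Fin n) ℝ :=
  Matrix.of fun i j =>
    iteratedFDeriv ℝ 2 g x ![EuclideanSpace.single i 1, EuclideanSpace.single j 1]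

/-- rK⁻_r = (−r,r)ⁿ × (0, r^σ]. -/
def rKm (n : ℕ) (σ r : ℝ) : Set (Eu n × ℝ) :=
  {x : Eu n | ∀ i, |x i| < r} ×ˢ Ioc (0 : ℝ) (r ^ σ)

/-- rK⁺_{3r} = (−3r,3r)ⁿ × (r^σ, (3^σ+2)·r^σ]. -/
def rKp (n : ℕ) (σ r : ℝ) : Set (Eu n × ℝ) :=
  {x : Eu n | ∀ i, |x i| < 3 * r} ×ˢ Ioc (r ^ σ) (((3 : ℝ) ^ σ + 2) * r ^ σ)

/-- bQ_r = B_r × (−r^σ, r^σ]. -/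
def bQ (n : ℕ) (σ r : ℝ) : Set (Eu n × ℝ) :=
  ball (0 : Eu n) r ×ˢ Ioc (-(r ^ σ)) (r ^ σ)

/-- rQ_r(x,t) = B_r(x) × (t, t + r^σ]. -/
def rQ (n : ℕ) (σ r : ℝ) (x : Eu n) (t : ℝ) : Set (Eu n × ℝ) :=
  ball x r ×ˢ Ioc t (t + r ^ σ)

/-- A symmetric kernel of order σ with ellipticity constants lam ≤ Lam. -/
def SymmKernel (n : ℕ) (lam Lam σ : ℝ) (K : Eu n → ℝ → ℝ) : Prop :=
  (∀ y t, K (-y) t = K y t) ∧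
  ∀ y : Eu n, y ≠ 0 → ∀ t,
    (2 - σ) * lam / ‖y‖ ^ ((n : ℝ) + σ) ≤ K y t ∧
    K y t ≤ (2 - σ) * Lam / ‖y‖ ^ ((n : ℝ) + σ)

/-- Isaacs operator I u = inf_β sup_α (L_{αβ} u + c_{αβ}). -/
def isaacs (n : ℕ) {A B : Type} (K : A → B → Eu n → ℝ → ℝ) (c : A → B → ℝ)
    (u : Eu n → ℝ → ℝ) (x : Eu n) (t : ℝ) : ℝ :=
  ⨅ b : B, ⨆ a : A, ((∫ y : Eu n, pmu n u x y t * K a b y t) + c a b)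




lemma line_hasDerivAt {n : ℕ} (x v : Eu n) (r : ℝ) :
    HasDerivAt (fun s : ℝ => x + s • v) v r := by
  simpa using ((hasDerivAt_id r).smul_const v).const_add x

lemma secondDiff_tendsto {n : ℕ} {U : Set (Eu n)} (hU : IsOpen U) {g : Eu n → ℝ}
    (hg : ContDiffOn ℝ 2 g U) {x : Eu n} (hx : x ∈ U) (v : Eu n) :
    Filter.Tendsto (fun r : ℝ => (g (x + r • v) + g (x - r • v) - 2 * g x) / r ^ 2)
      (𝓝[>] (0:ℝ)) (𝓝 (fderiv ℝ (fderiv ℝ g) x v v)) := by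
  have hcont : Continuous (fun r : ℝ => x + r • v) := by continuity
  have hpre : IsOpen ((fun r : ℝ => x + r • v) ⁻¹' U) := hU.preimage hcont
  have h0 : (0:ℝ) ∈ (fun r : ℝ => x + r • v) ⁻¹' U := by simpa using hx
  obtain ⟨δ, hδpos, hδ⟩ := Metric.isOpen_iff.1 hpre 0 h0
  have mem : ∀ r : ℝ, |r| < δ → x + r • v ∈ U := by
    intro r hr
    exact hδ (by simpa [Real.dist_eq] using hr)
  set ψ : ℝ → ℝ := fun r => g (x + r • v) with hψdef
  set D : ℝ → ℝ := fun r => fderiv ℝ g (x + r • v) v with hDdef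
  set Q : ℝ := fderiv ℝ (fderiv ℝ g) x v v with hQdef
  have hgdiff : DifferentiableOn ℝ g U := hg.differentiableOn (by norm_num)
  have hψ : ∀ r : ℝ, |r| < δ → HasDerivAt ψ (D r) r := by
    intro r hr
    have h1 : DifferentiableAt ℝ g (x + r • v) :=
      (hgdiff (x + r • v) (mem r hr)).differentiableAt (hU.mem_nhds (mem r hr))
    exact h1.hasFDerivAt.comp_hasDerivAt r (line_hasDerivAt x v r)
  have hΦ : ContDiffOn ℝ 1 (fun y => fderiv ℝ g y) U := hg.fderiv_of_isOpen hU (by norm_num)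
  have hΦdiff : DifferentiableAt ℝ (fun y => fderiv ℝ g y) x :=
    ((hΦ.differentiableOn (by norm_num)) x hx).differentiableAt (hU.mem_nhds hx)
  have hD : HasDerivAt D Q 0 := by
    have hc : HasDerivAt (fun r : ℝ => fderiv ℝ g (x + r • v))
        (fderiv ℝ (fun y => fderiv ℝ g y) x v) 0 := by
      have := hΦdiff.hasFDerivAt.comp_hasDerivAt_of_eq 0 (line_hasDerivAt x v 0)
        (by simp)
      exact this
    have := hc.clm_apply (hasDerivAt_const (0:ℝ) v)
    simpa using this
  have key : Tendsto (fun r : ℝ => (ψ r + ψ (-r) - 2 * ψ 0) / r ^ 2) (𝓝[>] (0:ℝ)) (𝓝 Q) := by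
    have hff' : ∀ r ∈ Ioo (0:ℝ) δ, HasDerivAt (fun r => ψ r + ψ (-r) - 2 * ψ 0)
        (D r - D (-r)) r := by
      intro r hr
      have h1 : HasDerivAt ψ (D r) r := hψ r (by rw [abs_of_pos hr.1]; exact hr.2)
      have h2 : HasDerivAt (fun s : ℝ => ψ (-s)) (-(D (-r))) r := by
        have hneg : HasDerivAt (fun s : ℝ => -s) (-1 : ℝ) r := (hasDerivAt_id r).neg
        have h3 : HasDerivAt ψ (D (-r)) (-r) :=
          hψ (-r) (by rw [abs_neg, abs_of_pos hr.1]; exact hr.2)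
        have := h3.comp r hneg
        rw [mul_neg, mul_one] at this
        exact this
      simpa [sub_eq_add_neg] using ((h1.add h2).sub_const (2 * ψ 0))
    have hgg' : ∀ r ∈ Ioo (0:ℝ) δ, HasDerivAt (fun r : ℝ => r ^ 2) (2 * r) r := by
      intro r _; simpa using hasDerivAt_pow 2 r
    have hg' : ∀ r ∈ Ioo (0:ℝ) δ, (2 : ℝ) * r ≠ 0 := fun r hr =>
      mul_ne_zero two_ne_zero (ne_of_gt hr.1)
    have hfa : Tendsto (fun r => ψ r + ψ (-r) - 2 * ψ 0) (𝓝[>] (0:ℝ)) (𝓝 0) := by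
      have hc0 : ContinuousAt ψ 0 := (hψ 0 (by simpa using hδpos)).continuousAt
      have h1 : Tendsto (fun r => ψ r + ψ (-r) - 2 * ψ 0) (𝓝 (0:ℝ))
          (𝓝 (ψ 0 + ψ 0 - 2 * ψ 0)) := by
        have hnn : Tendsto (fun r : ℝ => ψ (-r)) (𝓝 (0:ℝ)) (𝓝 (ψ 0)) := by
          have : Tendsto (fun r : ℝ => -r) (𝓝 (0:ℝ)) (𝓝 (0:ℝ)) := by
            simpa using (continuous_neg.tendsto (0:ℝ))
          exact hc0.tendsto.comp this
        exact (hc0.tendsto.add hnn).sub tendsto_const_nhds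
      have h00 : ψ 0 + ψ 0 - 2 * ψ 0 = 0 := by ring
      rw [h00] at h1
      exact h1.mono_left nhdsWithin_le_nhds
    have hga : Tendsto (fun r : ℝ => r ^ 2) (𝓝[>] (0:ℝ)) (𝓝 0) := by
      have : Tendsto (fun r : ℝ => r ^ 2) (𝓝 (0:ℝ)) (𝓝 ((0:ℝ) ^ 2)) :=
        (continuous_pow 2).tendsto 0
      simpa using this.mono_left nhdsWithin_le_nhds
    have hdiv : Tendsto (fun r => (D r - D (-r)) / (2 * r)) (𝓝[>] (0:ℝ)) (𝓝 Q) := by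
      have hslope := hasDerivAt_iff_tendsto_slope.mp hD
      have hmono : 𝓝[>] (0:ℝ) ≤ 𝓝[≠] (0:ℝ) :=
        nhdsWithin_mono 0 (fun r hr => by simpa using ne_of_gt hr)
      have T1 : Tendsto (fun r : ℝ => slope D 0 r) (𝓝[>] (0:ℝ)) (𝓝 Q) :=
        hslope.mono_left hmono
      have hnegt : Tendsto (fun r : ℝ => -r) (𝓝[>] (0:ℝ)) (𝓝[≠] (0:ℝ)) := by
        apply tendsto_nhdsWithin_of_tendsto_nhds_of_eventually_within
        · have : Tendsto (fun r : ℝ => -r) (𝓝 (0:ℝ)) (𝓝 (0:ℝ)) := by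
            simpa using (continuous_neg.tendsto (0:ℝ))
          exact this.mono_left nhdsWithin_le_nhds
        · filter_upwards [eventually_mem_nhdsWithin] with r hr
          simpa using neg_ne_zero.2 (ne_of_gt hr)
      have T2 : Tendsto (fun r : ℝ => slope D 0 (-r)) (𝓝[>] (0:ℝ)) (𝓝 Q) :=
        hslope.comp hnegt
      have T3 := (T1.add T2).div_const 2
      have hQQ : (Q + Q) / 2 = Q := by ring
      rw [hQQ] at T3
      refine T3.congr' ?_
      filter_upwards [eventually_mem_nhdsWithin] with r hr
      have hr0 : r ≠ 0 := ne_of_gt hr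
      have e1 : slope D 0 r = (D r - D 0) / r := by rw [slope_def_field, sub_zero]
      have e2 : slope D 0 (-r) = (D 0 - D (-r)) / r := by
        rw [slope_def_field, sub_zero, div_neg, ← neg_div, neg_sub]
      rw [e1, e2, ← add_div, div_div]
      rw [mul_comm r 2]
      congr 1
      ring
    exact HasDerivAt.lhopital_zero_right_on_Ioo hδpos hff' hgg' hg' hfa hga hdiv
  refine key.congr fun r => ?_
  have e1 : ψ (-r) = g (x - r • v) := by
    simp only [hψdef, neg_smul, ← sub_eq_add_neg]
  have e2 : ψ 0 = g x := by simp [hψdef]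
  rw [e1, e2]

set_option maxHeartbeats 2000000

/-- Propagation of the time-derivative bound from the contact set. -/
theorem time_derivative_propagation (n : ℕ) (hn : 1 ≤ n) (σ : ℝ) (hσ : σ ∈ Ioo (0 : ℝ) 2)
    (Γ Γt : Eu n → ℝ → ℝ) (M : ℝ) (hM : 0 < M)
    (hcont : ContinuousOn (fun p : Eu n × ℝ => Γ p.1 p.2)
      (closure (ball (0 : Eu n) 1 ×ˢ Ioc (-1 : ℝ) 0)))
    (hconc : ∀ t ∈ Icc (-1 : ℝ) 0, ConcaveOn ℝ (closedBall (0 : Eu n) 1) (fun x => Γ x t))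
    (hmono : ∀ x ∈ closedBall (0 : Eu n) 1, MonotoneOn (fun t => Γ x t) (Icc (-1 : ℝ) 0))
    (hbdry : ∀ p ∈ (sphere (0 : Eu n) 1 ×ˢ Ioc (-1 : ℝ) 0) ∪
        (closedBall (0 : Eu n) 1 ×ˢ ({-1} : Set ℝ)), Γ p.1 p.2 = 0)
    (hC2x : ∀ t ∈ Ioc (-1 : ℝ) 0, ContDiffOn ℝ 2 (fun x => Γ x t) (ball (0 : Eu n) 1))
    (hC1t : ∀ p ∈ ball (0 : Eu n) 1 ×ˢ Ioc (-1 : ℝ) 0,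
      HasDerivWithinAt (fun s => Γ p.1 s) (Γt p.1 p.2) (Iic p.2) p.2)
    (hbound : ∀ p ∈ ball (0 : Eu n) 1 ×ˢ Ioc (-1 : ℝ) 0,
      (hessMat n (fun x => Γ x p.2) p.1).det ≠ 0 → 0 ≤ Γt p.1 p.2 ∧ Γt p.1 p.2 ≤ M) :
    ∀ p ∈ ball (0 : Eu n) 1 ×ˢ Ioc (-1 : ℝ) 0, 0 ≤ Γt p.1 p.2 ∧ Γt p.1 p.2 ≤ 2 * M := by
  rintro ⟨x₀, t₀⟩ ⟨hx₀, ht₀⟩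
  have hx₀n : ‖x₀‖ < 1 := mem_ball_zero_iff.mp hx₀
  replace hx₀ : x₀ ∈ ball (0 : Eu n) 1 := hx₀
  replace ht₀ : t₀ ∈ Ioc (-1 : ℝ) 0 := ht₀
  show 0 ≤ Γt x₀ t₀ ∧ Γt x₀ t₀ ≤ 2 * M
  have hDW : HasDerivWithinAt (fun s => Γ x₀ s) (Γt x₀ t₀) (Iic t₀) t₀ := hC1t (x₀, t₀) ⟨hx₀, ht₀⟩
  rw [hasDerivWithinAt_iff_tendsto_slope, Iic_diff_right] at hDW
  constructor
  · -- lower bound from monotonicity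
    refine ge_of_tendsto hDW ?_
    filter_upwards [eventually_mem_nhdsWithin,
      eventually_nhdsWithin_of_eventually_nhds (eventually_gt_nhds ht₀.1)] with s hs hs1
    have hle : Γ x₀ s ≤ Γ x₀ t₀ :=
      hmono x₀ (ball_subset_closedBall hx₀) ⟨le_of_lt hs1, le_trans (le_of_lt hs) ht₀.2⟩
        ⟨le_of_lt ht₀.1, ht₀.2⟩ (le_of_lt hs)
    rw [slope_def_field]
    have h2 : (Γ x₀ s - Γ x₀ t₀) / (s - t₀) = (Γ x₀ t₀ - Γ x₀ s) / (t₀ - s) := by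
      rw [← neg_div_neg_eq]; ring_nf
    rw [h2]
    have hs' : s < t₀ := hs
    exact div_nonneg (by linarith) (by linarith)
  · -- upper bound
    by_contra hgt
    push_neg at hgt
    replace hgt : 2 * M < Γt x₀ t₀ := hgt
    have hev1 := hDW.eventually (eventually_gt_nhds hgt)
    have hev2 : ∀ᶠ s in 𝓝[Iio t₀] t₀, (-1 : ℝ) < s :=
      eventually_nhdsWithin_of_eventually_nhds (eventually_gt_nhds ht₀.1)
    obtain ⟨t₁, hA, ht₁gt, ht₁lt⟩ := (hev1.and (hev2.and eventually_mem_nhdsWithin)).exists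
    have ht₁lt' : t₁ < t₀ := ht₁lt
    obtain ⟨τ, hτdef⟩ : ∃ τ : ℝ, τ = t₀ - t₁ := ⟨t₀ - t₁, rfl⟩
    have hτ : 0 < τ := by rw [hτdef]; linarith
    have hincr : 2 * M * τ < Γ x₀ t₀ - Γ x₀ t₁ := by
      rw [slope_def_field] at hA
      have hc : t₁ - t₀ < 0 := by linarith
      have h3 := (lt_div_iff_of_neg hc).mp hA
      have h4 : 2 * M * (t₁ - t₀) = -(2 * M * τ) := by rw [hτdef]; ring
      linarith
    have h01 : ‖x₀‖ ^ 2 < 1 := by nlinarith [norm_nonneg x₀]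
    obtain ⟨κ, hκdef⟩ : ∃ κ : ℝ, κ = M * τ / (4 * (1 - ‖x₀‖ ^ 2)) :=
      ⟨M * τ / (4 * (1 - ‖x₀‖ ^ 2)), rfl⟩
    have hκ : 0 < κ := by
      rw [hκdef]
      apply div_pos (by positivity)
      nlinarith
    set Z : Eu n × ℝ → ℝ := fun q =>
      Γ q.1 q.2 - Γ q.1 t₁ - (3 * M / 2) * (q.2 - t₁) + κ * (‖q.1‖ ^ 2 - 1) with hZdef
    set K : Set (Eu n × ℝ) := closedBall (0 : Eu n) 1 ×ˢ Icc t₁ t₀ with hKdef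
    have hZval : ∀ (y : Eu n) (s : ℝ),
        Z (y, s) = Γ y s - Γ y t₁ - 3 * M / 2 * (s - t₁) + κ * (‖y‖ ^ 2 - 1) :=
      fun y s => rfl
    haveI : Nonempty (Fin n) := ⟨⟨0, hn⟩⟩
    haveI : Nontrivial (Eu n) := by
      refine ⟨EuclideanSpace.single ⟨0, hn⟩ (1:ℝ), 0, fun h => ?_⟩
      have := congrArg (fun v : Eu n => v ⟨0, hn⟩) h
      simp [EuclideanSpace.single_apply] at this
    have hclose : closure (ball (0:Eu n) 1 ×ˢ Ioc (-1:ℝ) 0)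
        = closedBall (0:Eu n) 1 ×ˢ Icc (-1:ℝ) 0 := by
      rw [closure_prod_eq, closure_ball (0:Eu n) one_ne_zero,
        closure_Ioc (by norm_num : (-1:ℝ) ≠ 0)]
    have hKsub : K ⊆ closure (ball (0:Eu n) 1 ×ˢ Ioc (-1:ℝ) 0) := by
      rw [hclose, hKdef]
      exact Set.prod_mono Subset.rfl (Icc_subset_Icc (by linarith) ht₀.2)
    have hcontZ : ContinuousOn Z K := by
      apply ContinuousOn.add
      · apply ContinuousOn.sub
        · apply ContinuousOn.sub
          · exact hcont.mono hKsub
          · have hmap : Set.MapsTo (fun q : Eu n × ℝ => (q.1, t₁)) K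
                (closure (ball (0:Eu n) 1 ×ˢ Ioc (-1:ℝ) 0)) := by
              rw [hclose]
              rintro ⟨y, s⟩ hy
              refine ⟨hy.1, le_of_lt ht₁gt, ?_⟩
              show t₁ ≤ 0
              linarith [ht₁lt', ht₀.2]
            exact hcont.comp (Continuous.continuousOn (by fun_prop)) hmap
        · exact Continuous.continuousOn (by fun_prop)
      · exact Continuous.continuousOn (by fun_prop)
    have hKcomp : IsCompact K := (isCompact_closedBall _ _).prod isCompact_Icc
    have hx₀K : ((x₀, t₀) : Eu n × ℝ) ∈ K :=
      ⟨ball_subset_closedBall hx₀, ⟨by linarith, le_refl t₀⟩⟩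
    obtain ⟨qb, hqbK, hqbmax⟩ := hKcomp.exists_isMaxOn ⟨(x₀, t₀), hx₀K⟩ hcontZ
    obtain ⟨xb, sb⟩ := qb
    obtain ⟨hxbK, hsbK⟩ := hqbK
    replace hxbK : xb ∈ closedBall (0 : Eu n) 1 := hxbK
    replace hsbK : sb ∈ Icc t₁ t₀ := hsbK
    have hxble : ‖xb‖ ≤ 1 := mem_closedBall_zero_iff.mp hxbK
    have hZmax : ∀ q ∈ K, Z q ≤ Z (xb, sb) := fun q hq => hqbmax hq
    have hpos01 : (0:ℝ) < 1 - ‖x₀‖ ^ 2 := by nlinarith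
    have hne4 : (4:ℝ) * (1 - ‖x₀‖ ^ 2) ≠ 0 := by positivity
    have hκx₀ : κ * (1 - ‖x₀‖ ^ 2) = M * τ / 4 := by
      rw [hκdef, div_mul_eq_mul_div, div_eq_div_iff hne4 (by norm_num : (4:ℝ) ≠ 0)]
      ring
    have hZx₀ : 0 < Z (x₀, t₀) := by
      have he : Z (x₀, t₀) = (Γ x₀ t₀ - Γ x₀ t₁) - (3*M/2)*τ - κ*(1-‖x₀‖^2) := by
        rw [hZval, hτdef]; ring
      rw [he, hκx₀]
      have := mul_pos hM hτ
      linarith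
    have hZpos : 0 < Z (xb, sb) := lt_of_lt_of_le hZx₀ (hZmax _ hx₀K)
    have hsbIoc : sb ∈ Ioc (-1:ℝ) 0 := ⟨by linarith [hsbK.1], le_trans hsbK.2 ht₀.2⟩
    have ht₁Ioc : t₁ ∈ Ioc (-1:ℝ) 0 := ⟨ht₁gt, by linarith [ht₀.2]⟩
    have hxb : ‖xb‖ < 1 := by
      rcases lt_or_eq_of_le hxble with h | h
      · exact h
      · exfalso
        have hsph : xb ∈ sphere (0:Eu n) 1 := by
          simpa [mem_sphere_zero_iff_norm] using h
        have hb1 : Γ xb sb = 0 := hbdry (xb, sb) (Or.inl ⟨hsph, hsbIoc⟩)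
        have hb2 : Γ xb t₁ = 0 := hbdry (xb, t₁) (Or.inl ⟨hsph, ht₁Ioc⟩)
        have he : Z (xb, sb) = -(3*M/2)*(sb - t₁) + κ*(‖xb‖^2-1) := by
          rw [hZval, hb1, hb2]; ring
        rw [he] at hZpos
        have h1 : ‖xb‖ ^ 2 = 1 := by rw [h, one_pow]
        rw [h1] at hZpos
        have h2 : t₁ ≤ sb := hsbK.1
        nlinarith [mul_pos hM hτ, mul_nonneg (le_of_lt hM) (sub_nonneg.mpr h2)]
    have hsbgt : t₁ < sb := by
      rcases lt_or_eq_of_le hsbK.1 with h | h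
      · exact h
      · exfalso
        have he : Z (xb, sb) = κ * (‖xb‖^2 - 1) := by
          rw [hZval, ← h]; ring
        rw [he] at hZpos
        have h2 : ‖xb‖ ^ 2 ≤ 1 := by nlinarith [norm_nonneg xb]
        nlinarith
    have hqbmem : ((xb, sb) : Eu n × ℝ) ∈ ball (0:Eu n) 1 ×ˢ Ioc (-1:ℝ) 0 :=
      ⟨mem_ball_zero_iff.mpr hxb, hsbIoc⟩
    -- time derivative at the max point
    have hts := hC1t (xb, sb) hqbmem
    rw [hasDerivWithinAt_iff_tendsto_slope, Iic_diff_right] at hts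
    have hΓts : 3 * M / 2 ≤ Γt xb sb := by
      refine ge_of_tendsto hts ?_
      filter_upwards [eventually_mem_nhdsWithin,
        eventually_nhdsWithin_of_eventually_nhds (eventually_gt_nhds hsbgt)] with u hu hu1
      have hu' : u < sb := hu
      have huK : ((xb, u) : Eu n × ℝ) ∈ K := ⟨hxbK, ⟨le_of_lt hu1, by linarith [hsbK.2]⟩⟩
      have hZu := hZmax _ huK
      rw [hZval, hZval] at hZu
      have hkey : (3*M/2) * (sb - u) ≤ Γ xb sb - Γ xb u := by linarith
      rw [slope_def_field]
      rw [le_div_iff_of_neg (by linarith : u - sb < 0)]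
      linarith
    set f₁ : Eu n → ℝ := fun x => Γ x sb with hf₁def
    set f₂ : Eu n → ℝ := fun x => Γ x t₁ with hf₂def
    have hdet0 : (hessMat n f₁ xb).det = 0 := by
      by_contra hne
      have := (hbound (xb, sb) hqbmem hne).2
      linarith
    have hf₁ : ContDiffOn ℝ 2 f₁ (ball (0:Eu n) 1) := hC2x sb hsbIoc
    have hconc₂ : ConcaveOn ℝ (closedBall (0:Eu n) 1) f₂ := hconc t₁ ⟨le_of_lt ht₁Ioc.1, ht₁Ioc.2⟩
    have hxbmem : xb ∈ ball (0:Eu n) 1 := mem_ball_zero_iff.mpr hxb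
    -- second derivative quadratic form is strictly negative
    have hQneg : ∀ v : Eu n, fderiv ℝ (fderiv ℝ f₁) xb v v ≤ -(2 * κ * ‖v‖ ^ 2) := by
      intro v
      have TT := secondDiff_tendsto isOpen_ball hf₁ hxbmem v
      refine le_of_tendsto TT ?_
      have hv1 : (0:ℝ) < ‖v‖ + 1 := by positivity
      have hρ : 0 < (1 - ‖xb‖) / (‖v‖ + 1) := div_pos (by linarith) hv1
      filter_upwards [Ioo_mem_nhdsGT_of_mem
        (show (0:ℝ) ∈ Ico (0:ℝ) ((1 - ‖xb‖) / (‖v‖ + 1)) from ⟨le_refl _, hρ⟩)] with r hr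
      obtain ⟨hr0, hrρ⟩ := hr
      have hrv : ‖r • v‖ < 1 - ‖xb‖ := by
        rw [norm_smul, Real.norm_eq_abs, abs_of_pos hr0]
        calc r * ‖v‖ ≤ r * (‖v‖ + 1) := by
              have := norm_nonneg v
              nlinarith
          _ < ((1 - ‖xb‖) / (‖v‖ + 1)) * (‖v‖ + 1) :=
            mul_lt_mul_of_pos_right hrρ hv1
          _ = 1 - ‖xb‖ := div_mul_cancel₀ _ (ne_of_gt hv1)
      have hmemp : xb + r • v ∈ closedBall (0:Eu n) 1 := by
        rw [mem_closedBall_zero_iff]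
        calc ‖xb + r • v‖ ≤ ‖xb‖ + ‖r • v‖ := norm_add_le _ _
          _ ≤ 1 := by linarith
      have hmemm : xb - r • v ∈ closedBall (0:Eu n) 1 := by
        rw [mem_closedBall_zero_iff]
        calc ‖xb - r • v‖ ≤ ‖xb‖ + ‖r • v‖ := norm_sub_le _ _
          _ ≤ 1 := by linarith
      have hZp := hZmax (xb + r • v, sb) ⟨hmemp, hsbK⟩
      have hZm := hZmax (xb - r • v, sb) ⟨hmemm, hsbK⟩
      rw [hZval, hZval] at hZp
      rw [hZval, hZval] at hZm
      have hcv : f₂ (xb + r • v) + f₂ (xb - r • v) ≤ 2 * f₂ xb := by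
        have h2 := hconc₂.2 hmemp hmemm (by norm_num : (0:ℝ) ≤ 1/2) (by norm_num : (0:ℝ) ≤ 1/2)
          (by norm_num)
        have hmid : (1/2 : ℝ) • (xb + r • v) + (1/2 : ℝ) • (xb - r • v) = xb := by module
        rw [hmid] at h2
        simp only [smul_eq_mul] at h2
        linarith
      have hpar : ‖xb + r • v‖ ^ 2 + ‖xb - r • v‖ ^ 2 = 2 * ‖xb‖ ^ 2 + 2 * (r ^ 2 * ‖v‖ ^ 2) := by
        rw [norm_add_sq_real, norm_sub_sq_real]
        have hsm : ‖r • v‖ ^ 2 = r ^ 2 * ‖v‖ ^ 2 := by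
          rw [norm_smul, Real.norm_eq_abs, mul_pow, sq_abs]
        rw [hsm]; ring
      have hκpar : κ * (‖xb + r • v‖ ^ 2 - 1) + κ * (‖xb - r • v‖ ^ 2 - 1)
          = 2 * κ * (‖xb‖ ^ 2 - 1) + 2 * (κ * (r ^ 2 * ‖v‖ ^ 2)) := by
        linear_combination κ * hpar
      have hnum : f₁ (xb + r • v) + f₁ (xb - r • v) - 2 * f₁ xb ≤ -(2 * κ * ‖v‖ ^ 2) * r ^ 2 := by
        simp only [hf₁def, hf₂def] at hcv ⊢
        nlinarith [hZp, hZm, hcv, hκpar]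
      rw [div_le_iff₀ (by positivity : (0:ℝ) < r ^ 2)]
      exact hnum
    -- assemble negative definiteness of the Hessian
    set B2 := fderiv ℝ (fderiv ℝ f₁) xb with hB2def
    have hΦ1 : ContDiffOn ℝ 1 (fun y => fderiv ℝ f₁ y) (ball (0:Eu n) 1) :=
      hf₁.fderiv_of_isOpen isOpen_ball (by norm_num)
    have hB2at : HasFDerivAt (fun y => fderiv ℝ f₁ y) B2 xb :=
      (((hΦ1.differentiableOn (by norm_num)) xb hxbmem).differentiableAt
        (isOpen_ball.mem_nhds hxbmem)).hasFDerivAt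
    have hev : ∀ᶠ y in 𝓝 xb, HasFDerivAt f₁ (fderiv ℝ f₁ y) y := by
      filter_upwards [isOpen_ball.eventually_mem hxbmem] with y hy
      exact (((hf₁.differentiableOn (by norm_num)) y hy).differentiableAt
        (isOpen_ball.mem_nhds hy)).hasFDerivAt
    have hsymm : ∀ v w : Eu n, B2 v w = B2 w v := fun v w =>
      second_derivative_symmetric_of_eventually hev hB2at v w
    set EE : Fin n → Eu n := fun i => EuclideanSpace.single i (1:ℝ) with hEdef
    have hrepr : ∀ y : Eu n, (∑ i, y i • EE i) = y := by
      intro y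
      have h := (EuclideanSpace.basisFun (Fin n) ℝ).sum_repr y
      simpa [EuclideanSpace.basisFun_apply, EuclideanSpace.basisFun_repr, hEdef] using h
    have hH : ∀ i j, hessMat n f₁ xb i j = B2 (EE i) (EE j) := by
      intro i j
      simp only [hessMat, Matrix.of_apply, hEdef, hB2def]
      rw [iteratedFDeriv_two_apply]
      simp
    have hexp : ∀ y : Eu n, B2 y y = ∑ i, ∑ j, (y i * y j) * B2 (EE i) (EE j) := by
      intro y
      have h1 : B2 (∑ i, y i • EE i) = ∑ i, y i • B2 (EE i) := by
        rw [_root_.map_sum]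
        exact Finset.sum_congr rfl fun i _ => by rw [_root_.map_smul]
      calc B2 y y = B2 (∑ i, y i • EE i) (∑ j, y j • EE j) := by rw [hrepr y]
        _ = ∑ i, (y i • B2 (EE i)) (∑ j, y j • EE j) := by
            rw [h1, ContinuousLinearMap.sum_apply]
        _ = ∑ i, y i * (B2 (EE i) (∑ j, y j • EE j)) := by
            refine Finset.sum_congr rfl fun i _ => ?_
            rw [ContinuousLinearMap.smul_apply, smul_eq_mul]
        _ = ∑ i, y i * (∑ j, y j * B2 (EE i) (EE j)) := by
            refine Finset.sum_congr rfl fun i _ => ?_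
            congr 1
            rw [_root_.map_sum]
            exact Finset.sum_congr rfl fun j _ => by rw [_root_.map_smul, smul_eq_mul]
        _ = ∑ i, ∑ j, (y i * y j) * B2 (EE i) (EE j) := by
            refine Finset.sum_congr rfl fun i _ => ?_
            rw [Finset.mul_sum]
            exact Finset.sum_congr rfl fun j _ => by ring
    have hherm : (hessMat n f₁ xb).IsHermitian := by
      have : (hessMat n f₁ xb).conjTranspose = hessMat n f₁ xb := by
        ext i j
        rw [Matrix.conjTranspose_apply, star_trivial, hH, hH, hsymm]
      exact this
    have hpd : (-(hessMat n f₁ xb)).PosDef := by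
      rw [Matrix.posDef_iff_dotProduct_mulVec]
      constructor
      · exact hherm.neg
      · intro w hw
        have hy0 : (WithLp.toLp 2 w : Eu n) ≠ 0 := fun h => hw (by simpa using congrArg WithLp.ofLp h)
        set y : Eu n := WithLp.toLp 2 w with hydef
        have hyw : ∀ i, y i = w i := fun _ => rfl
        have hyn : 0 < ‖y‖ := norm_pos_iff.mpr hy0
        have hy2 : 0 < ‖y‖ ^ 2 := by positivity
        have hneg : B2 y y < 0 :=
          lt_of_le_of_lt (hQneg y) (by nlinarith [mul_pos hκ hy2])
        have hdot : dotProduct (star w) (Matrix.mulVec (-(hessMat n f₁ xb)) w)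
            = - B2 y y := by
          rw [hexp y]
          simp only [Matrix.mulVec, dotProduct, Matrix.neg_apply, Pi.star_apply,
            star_trivial, hH]
          rw [← Finset.sum_neg_distrib]
          refine Finset.sum_congr rfl fun i _ => ?_
          rw [Finset.mul_sum, ← Finset.sum_neg_distrib]
          refine Finset.sum_congr rfl fun j _ => ?_
          rw [hyw i, hyw j]
          ring
        rw [hdot]
        linarith
    have hdetpos := hpd.det_pos
    rw [Matrix.det_neg, hdet0, mul_zero] at hdetpos
    exact lt_irrefl 0 hdetpos


end
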